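/- For any nonnegative integers k, r and positive integers ℓ, N, there exists an integer N* ≥ N such that the following holds: let G be a graph, S ⊆ V(G) with |S| ≤ k, Z ⊆ N_G^{≤r}[S], m a positive integer, c_Z : Z → [m] any function, and c an m-coloring of (G−Z)^ℓ all of whose monochromatic components have weak diameter in (G−Z)^ℓ at most N. Then the combined m-coloring c ∪ c_Z of G^ℓ has all monochromatic components of weak diameter in G^ℓ at most N*. Moreover one may take N* = f(k) where f(0) = N and f(α) = 2r + 2ℓ + 2f(α−1). -/

import Mathlib

open SimpleGraph
attribute [local instance] Classical.propDecidable

/-- The ℓ-th power of a graph: distinct vertices are adjacent iff their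
distance in `G` is at most `ℓ` (using the extended distance, so unreachable
pairs are non-adjacent). -/
def SimpleGraph.pow {V : Type} (G : SimpleGraph V) (ℓ : ℕ) : SimpleGraph V where
  Adj u v := u ≠ v ∧ G.edist u v ≤ ℓ
  symm := by
    constructor; intro u v h
    exact ⟨h.1.symm, by rw [SimpleGraph.edist_comm]; exact h.2⟩
  loopless := by constructor; intro v h; exact h.1 rfl

/-- `MonoReach H c u v` : `u` and `v` lie in the same `c`-monochromatic
component of `H` (joined by a walk all of whose vertices get the same color). -/
def MonoReach {V : Type} {α : Type} (H : SimpleGraph V) (c : V → α) : V → V → Prop :=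
  Relation.ReflTransGen (fun a b => H.Adj a b ∧ c a = c b)

/-- `N_G^{≤ r}[S]` : vertices joined to `S` by a path of length at most `r`. -/
def ballSet {V : Type} (G : SimpleGraph V) (S : Set V) (r : ℕ) : Set V :=
  {v | ∃ s ∈ S, G.edist s v ≤ r}

/-- Tree-decomposition of `G` with tree `Tg` and bags `bag`. -/
def IsTreeDecomp {V T : Type} (G : SimpleGraph V) (Tg : SimpleGraph T) (bag : T → Set V) : Prop :=
  Tg.Connected ∧ Tg.IsAcyclic ∧
  (∀ v, ∃ t, v ∈ bag t) ∧
  (∀ u v, G.Adj u v → ∃ t, u ∈ bag t ∧ v ∈ bag t) ∧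
  (∀ v, (Tg.induce {t | v ∈ bag t}).Preconnected)

/-- A layering of `G`: every edge joins two consecutive layers. -/
def IsLayering {V : Type} (G : SimpleGraph V) (L : V → ℕ) : Prop :=
  ∀ u v, G.Adj u v → L u ≤ L v + 1 ∧ L v ≤ L u + 1

/-- Layered tree-width at most `w`. -/
def LayeredTreewidthLE (V : Type) (G : SimpleGraph V) (w : ℕ) : Prop :=
  ∃ (T : Type) (Tg : SimpleGraph T) (bag : T → Set V) (L : V → ℕ),
    IsTreeDecomp G Tg bag ∧ IsLayering G L ∧
    ∀ t i, (bag t ∩ L ⁻¹' {i}).encard ≤ w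

/-- The explicit control function: `f 0 = N`, `f (α+1) = 2r + 2ℓ + 2·f α`. -/
def fstar (r ℓ N : ℕ) : ℕ → ℕ
  | 0 => N
  | (k+1) => 2*r + 2*ℓ + 2 * fstar r ℓ N k

namespace Stmt4Aux

variable {V : Type}

lemma edist_map_le {W : Type} {H : SimpleGraph W} {G : SimpleGraph V} (f : H →g G) (u v : W) :
    G.edist (f u) (f v) ≤ H.edist u v := by
  rcases eq_or_ne (H.edist u v) ⊤ with h | h
  · exact h ▸ le_top
  · obtain ⟨p, hp⟩ := SimpleGraph.exists_walk_of_edist_ne_top h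
    rw [← hp]
    calc G.edist (f u) (f v) ≤ ((p.map f).length : ℕ∞) := SimpleGraph.edist_le _
      _ = (p.length : ℕ∞) := by rw [SimpleGraph.Walk.length_map]

lemma le_pow {G : SimpleGraph V} {ℓ : ℕ} (hℓ : 0 < ℓ) : G ≤ G.pow ℓ := by
  intro u v h
  exact ⟨h.ne, le_trans (SimpleGraph.edist_eq_one_iff_adj.mpr h).le (by exact_mod_cast hℓ)⟩

lemma pow_edist_le {G : SimpleGraph V} {ℓ : ℕ} (hℓ : 0 < ℓ) (u v : V) :
    (G.pow ℓ).edist u v ≤ G.edist u v := SimpleGraph.edist_anti (le_pow hℓ)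

lemma walk_induce {G : SimpleGraph V} {s : Set V} :
    ∀ {a b : V} (p : G.Walk a b), (∀ x ∈ p.support, x ∈ s) → ∀ (ha : a ∈ s) (hb : b ∈ s),
      ∃ q : (G.induce s).Walk ⟨a, ha⟩ ⟨b, hb⟩, q.length = p.length := by
  intro a b p
  induction p with
  | nil => intro _ ha hb; exact ⟨SimpleGraph.Walk.nil, rfl⟩
  | @cons a a' b h p ih =>
    intro hs ha hb
    have ha' : a' ∈ s := hs a' (by simp [SimpleGraph.Walk.support_cons])
    obtain ⟨q, hq⟩ := ih (fun x hx => hs x (by simp [SimpleGraph.Walk.support_cons, hx])) ha' hb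
    exact ⟨SimpleGraph.Walk.cons (by simpa using h) q, by simp [hq]⟩

lemma edist_support_le {G : SimpleGraph V} {a b x : V} (p : G.Walk a b) (hx : x ∈ p.support)
    (hxb : x ≠ b) : G.edist a x + 1 ≤ (p.length : ℕ∞) := by
  have hsplit := congrArg SimpleGraph.Walk.length (p.take_spec hx)
  rw [SimpleGraph.Walk.length_append] at hsplit
  have hd : (p.dropUntil x hx).length ≠ 0 :=
    fun h0 => hxb (SimpleGraph.Walk.eq_of_length_eq_zero h0)
  have h1 : (p.takeUntil x hx).length + 1 ≤ p.length := by omega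
  calc G.edist a x + 1 ≤ ((p.takeUntil x hx).length : ℕ∞) + 1 := by
        gcongr
        exact SimpleGraph.edist_le _
    _ ≤ (p.length : ℕ∞) := by exact_mod_cast h1

/-- Vertex condition: a `Z`-vertex must be within distance `r` of `A`. -/
def Cond (G : SimpleGraph V) (Z : Set V) (r : ℕ) (A : Set V) (x : V) : Prop :=
  x ∈ Z → x ∈ ballSet G A r

/-- Edge condition: a realizing walk of length at most `ℓ` whose internal
vertices meet `Z` only within distance `r` of `A`. -/
def EdgeCond (G : SimpleGraph V) (Z : Set V) (r ℓ : ℕ) (A : Set V) (a b : V) : Prop :=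
  ∃ p : G.Walk a b, p.length ≤ ℓ ∧
    ∀ x ∈ p.support, x ≠ a → x ≠ b → Cond G Z r A x

def Rel {m : ℕ} (G : SimpleGraph V) (Z : Set V) (r ℓ : ℕ) (c' : V → Fin m) (A : Set V)
    (a b : V) : Prop :=
  (G.pow ℓ).Adj a b ∧ c' a = c' b ∧ Cond G Z r A a ∧ Cond G Z r A b ∧ EdgeCond G Z r ℓ A a b

lemma Rel.symm {m : ℕ} {G : SimpleGraph V} {Z : Set V} {r ℓ : ℕ} {c' : V → Fin m} {A : Set V}
    {a b : V} (h : Rel G Z r ℓ c' A a b) : Rel G Z r ℓ c' A b a := by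
  obtain ⟨h1, h2, h3, h4, p, hp, hs⟩ := h
  exact ⟨h1.symm, h2.symm, h4, h3, p.reverse, by simpa using hp,
    fun x hx hxa hxb => hs x (by simpa using hx) hxb hxa⟩

lemma rtg_symm {R : V → V → Prop} (hsym : ∀ {a b}, R a b → R b a) {u v : V}
    (h : Relation.ReflTransGen R u v) : Relation.ReflTransGen R v u := by
  induction h with
  | refl => exact .refl
  | tail _ hbc ih => exact .head (hsym hbc) ih

lemma split_first {R : V → V → Prop} {P : V → Prop} {u v : V}
    (h : Relation.ReflTransGen R u v) :
    ¬ P u →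
      (¬ P v ∧ Relation.ReflTransGen (fun a b => R a b ∧ ¬ P a ∧ ¬ P b) u v) ∨
      ∃ a x, Relation.ReflTransGen (fun a b => R a b ∧ ¬ P a ∧ ¬ P b) u a ∧ R a x ∧ P x := by
  induction h using Relation.ReflTransGen.head_induction_on with
  | refl => intro hu; exact Or.inl ⟨hu, .refl⟩
  | @head a c hac hcv ih =>
    intro hu
    by_cases hPc : P c
    · exact Or.inr ⟨a, c, .refl, hac, hPc⟩
    · rcases ih hPc with ⟨hPv, ch⟩ | ⟨a', x, ch, hax, hPx⟩
      · exact Or.inl ⟨hPv, .head ⟨hac, hu, hPc⟩ ch⟩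
      · exact Or.inr ⟨a', x, .head ⟨hac, hu, hPc⟩ ch, hax, hPx⟩

/-- The homomorphism from `(G.induce s)^ℓ` to `G^ℓ`. -/
def powHom (G : SimpleGraph V) (s : Set V) (ℓ : ℕ) : ((G.induce s).pow ℓ) →g (G.pow ℓ) where
  toFun := Subtype.val
  map_rel' := by
    rintro a b ⟨hne, hd⟩
    refine ⟨fun e => hne (Subtype.ext e), le_trans ?_ hd⟩
    exact edist_map_le (SimpleGraph.Embedding.induce s).toHom a b

lemma ballSet_empty {G : SimpleGraph V} {r : ℕ} : ballSet G (∅ : Set V) r = ∅ := by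
  ext x; simp [ballSet]

/-- The base case: a `Rel ∅` chain stays in `G - Z` and is monochromatic for `c`. -/
lemma base {G : SimpleGraph V} {Z : Set V} {r ℓ N : ℕ} {m : ℕ}
    {c : {v : V // v ∈ ({v | v ∉ Z} : Set V)} → Fin m} {c' : V → Fin m}
    (hc' : ∀ (x : V) (hx : x ∉ Z), c' x = c ⟨x, hx⟩)
    (hc : ∀ u v, MonoReach ((G.induce {v | v ∉ Z}).pow ℓ) c u v →
          ((G.induce {v | v ∉ Z}).pow ℓ).edist u v ≤ (N : ℕ∞))
    {u v : V} (h : Relation.ReflTransGen (Rel G Z r ℓ c' ∅) u v) :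
    (G.pow ℓ).edist u v ≤ (N : ℕ∞) := by
  have step : ∀ {a b : V}, Rel G Z r ℓ c' ∅ a b → ∃ (ha : a ∉ Z) (hb : b ∉ Z),
      ((G.induce {v | v ∉ Z}).pow ℓ).Adj ⟨a, ha⟩ ⟨b, hb⟩ ∧ c ⟨a, ha⟩ = c ⟨b, hb⟩ := by
    rintro a b ⟨hadj, hcol, hca, hcb, p, hp, hsup⟩
    have ha : a ∉ Z := fun hz => by simpa [ballSet_empty] using hca hz
    have hb : b ∉ Z := fun hz => by simpa [ballSet_empty] using hcb hz
    have hsupp : ∀ x ∈ p.support, x ∈ ({v | v ∉ Z} : Set V) := by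
      intro x hx
      by_cases hxa : x = a
      · subst hxa; exact ha
      · by_cases hxb : x = b
        · subst hxb; exact hb
        · exact fun hz => by simpa [ballSet_empty] using hsup x hx hxa hxb hz
    obtain ⟨q, hq⟩ := walk_induce p hsupp ha hb
    refine ⟨ha, hb, ⟨fun e => hadj.1 (congrArg Subtype.val e), ?_⟩, ?_⟩
    · calc (G.induce {v | v ∉ Z}).edist ⟨a, ha⟩ ⟨b, hb⟩ ≤ (q.length : ℕ∞) :=
            SimpleGraph.edist_le q
        _ ≤ (ℓ : ℕ∞) := by exact_mod_cast hq ▸ hp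
    · rw [← hc' a ha, ← hc' b hb]; exact hcol
  have main : ∀ {w : V}, Relation.ReflTransGen (Rel G Z r ℓ c' ∅) u w →
      u = w ∨ ∃ (hu : u ∉ Z) (hw : w ∉ Z),
        MonoReach ((G.induce {v | v ∉ Z}).pow ℓ) c ⟨u, hu⟩ ⟨w, hw⟩ := by
    intro w hw
    induction hw with
    | refl => exact Or.inl rfl
    | tail _ hbc ih =>
      obtain ⟨hb, hcW, hadj, hcol⟩ := step hbc
      rcases ih with rfl | ⟨hu, _, hm⟩
      · exact Or.inr ⟨hb, hcW, Relation.ReflTransGen.single ⟨hadj, hcol⟩⟩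
      · exact Or.inr ⟨hu, hcW, Relation.ReflTransGen.tail hm ⟨hadj, hcol⟩⟩
  rcases main h with rfl | ⟨hu, hv, hm⟩
  · simp [SimpleGraph.edist_self]
  · have hle := hc _ _ hm
    exact le_trans (edist_map_le (powHom G {v | v ∉ Z} ℓ) ⟨u, hu⟩ ⟨v, hv⟩) hle

lemma fstar_le_succ (r ℓ N α : ℕ) : fstar r ℓ N α ≤ fstar r ℓ N (α+1) := by
  show fstar r ℓ N α ≤ 2*r + 2*ℓ + 2 * fstar r ℓ N α
  omega

lemma le_fstar (r ℓ N : ℕ) : ∀ α, N ≤ fstar r ℓ N α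
  | 0 => le_refl N
  | (α+1) => le_trans (le_fstar r ℓ N α) (fstar_le_succ r ℓ N α)

/-- The key inductive lemma. -/
lemma key {G : SimpleGraph V} {Z : Set V} {r ℓ N : ℕ} {m : ℕ}
    {c : {v : V // v ∈ ({v | v ∉ Z} : Set V)} → Fin m} {c' : V → Fin m}
    (hc' : ∀ (x : V) (hx : x ∉ Z), c' x = c ⟨x, hx⟩)
    (hℓ : 0 < ℓ)
    (hc : ∀ u v, MonoReach ((G.induce {v | v ∉ Z}).pow ℓ) c u v →
          ((G.induce {v | v ∉ Z}).pow ℓ).edist u v ≤ (N : ℕ∞)) :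
    ∀ (α : ℕ) (A : Set V), A.encard ≤ (α : ℕ∞) →
      ∀ u v, Relation.ReflTransGen (Rel G Z r ℓ c' A) u v →
        (G.pow ℓ).edist u v ≤ ((fstar r ℓ N α : ℕ) : ℕ∞) := by
  intro α
  induction α with
  | zero =>
    intro A hA u v h
    have hA0 : A = ∅ := by
      rw [← Set.encard_eq_zero]
      simpa using hA
    subst hA0
    simpa [fstar] using base hc' hc h
  | succ α ih =>
    intro A hA u v h
    by_cases hAe : A = ∅
    · subst hAe
      refine le_trans (base hc' hc h) ?_
      exact_mod_cast le_fstar r ℓ N (α+1)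
    · obtain ⟨s, hs⟩ := Set.nonempty_iff_ne_empty.mpr hAe
      set A' := A \ {s} with hA'def
      have hA' : A'.encard ≤ (α : ℕ∞) := by
        have h1 : A'.encard + 1 = A.encard := Set.encard_diff_singleton_add_one hs
        have h2 : A'.encard + 1 ≤ (α : ℕ∞) + 1 := by
          rw [h1]; exact_mod_cast hA
        exact (WithTop.add_le_add_iff_right (by simp : (1 : ℕ∞) ≠ ⊤)).mp h2
      set P : V → Prop := fun x => G.edist s x + 1 ≤ ((r + ℓ : ℕ) : ℕ∞) with hPdef
      -- restriction of the relation away from the ball of s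
      have restrict : ∀ {a b : V}, Rel G Z r ℓ c' A a b → ¬ P a → ¬ P b →
          Rel G Z r ℓ c' A' a b := by
        rintro a b ⟨hadj, hcol, hca, hcb, p, hp, hsup⟩ hPa hPb
        have condt : ∀ {x : V}, ¬ P x → Cond G Z r A x → Cond G Z r A' x := by
          intro x hPx hcx hz
          obtain ⟨s', hs', hd⟩ := hcx hz
          have hne : s' ≠ s := by
            rintro rfl
            apply hPx
            calc G.edist s' x + 1 ≤ (r : ℕ∞) + 1 := by gcongr
              _ ≤ ((r + ℓ : ℕ) : ℕ∞) := by
                  push_cast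
                  gcongr
                  exact_mod_cast hℓ
          exact ⟨s', ⟨hs', hne⟩, hd⟩
        refine ⟨hadj, hcol, condt hPa hca, condt hPb hcb, p, hp, ?_⟩
        intro x hx hxa hxb hz
        obtain ⟨s', hs', hd⟩ := hsup x hx hxa hxb hz
        have hne : s' ≠ s := by
          rintro rfl
          apply hPa
          have hax : G.edist a x + 1 ≤ (ℓ : ℕ∞) :=
            le_trans (edist_support_le p hx hxb) (by exact_mod_cast hp)
          calc G.edist s' a + 1 ≤ (G.edist s' x + G.edist x a) + 1 := by
                gcongr
                exact SimpleGraph.edist_triangle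
            _ = G.edist s' x + (G.edist a x + 1) := by
                rw [SimpleGraph.edist_comm (u := x) (v := a)]; ring
            _ ≤ (r : ℕ∞) + (ℓ : ℕ∞) := by gcongr
            _ = ((r + ℓ : ℕ) : ℕ∞) := by push_cast; ring
        exact ⟨s', ⟨hs', hne⟩, hd⟩
      -- from P x, bound the edist in the power graph from x to s
      have hP_edist : ∀ {x : V}, P x → (G.pow ℓ).edist x s ≤ ((r + ℓ - 1 : ℕ) : ℕ∞) := by
        intro x hPx
        have hcast : ((r + ℓ : ℕ) : ℕ∞) = ((r + ℓ - 1 : ℕ) : ℕ∞) + 1 := by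
          have hn : r + ℓ = (r + ℓ - 1) + 1 := by omega
          rw [hn]
          push_cast
          ring
        have hPx' : G.edist s x + 1 ≤ ((r + ℓ : ℕ) : ℕ∞) := hPx
        rw [hcast] at hPx'
        have h2 : G.edist s x ≤ ((r + ℓ - 1 : ℕ) : ℕ∞) :=
          (WithTop.add_le_add_iff_right (by simp : (1 : ℕ∞) ≠ ⊤)).mp hPx'
        calc (G.pow ℓ).edist x s ≤ G.edist x s := pow_edist_le hℓ x s
          _ = G.edist s x := SimpleGraph.edist_comm
          _ ≤ ((r + ℓ - 1 : ℕ) : ℕ∞) := h2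
      -- one-sided analysis
      have side : ∀ {a b : V}, Relation.ReflTransGen (Rel G Z r ℓ c' A) a b →
          (G.pow ℓ).edist a b ≤ ((fstar r ℓ N (α+1) : ℕ) : ℕ∞) ∨
          ∃ x, P x ∧ (G.pow ℓ).edist a x ≤ ((fstar r ℓ N α + 1 : ℕ) : ℕ∞) := by
        intro a b hab
        by_cases hPa : P a
        · exact Or.inr ⟨a, hPa, by simp [SimpleGraph.edist_self]⟩
        · rcases split_first hab hPa with ⟨_, ch⟩ | ⟨a', x, ch, hax, hPx⟩
          · have ch' : Relation.ReflTransGen (Rel G Z r ℓ c' A') a b :=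
              Relation.ReflTransGen.mono (fun _ _ hr => restrict hr.1 hr.2.1 hr.2.2) _ _ ch
            refine Or.inl (le_trans (ih A' hA' a b ch') ?_)
            exact_mod_cast fstar_le_succ r ℓ N α
          · have ch' : Relation.ReflTransGen (Rel G Z r ℓ c' A') a a' :=
              Relation.ReflTransGen.mono (fun _ _ hr => restrict hr.1 hr.2.1 hr.2.2) _ _ ch
            have h1 : (G.pow ℓ).edist a a' ≤ ((fstar r ℓ N α : ℕ) : ℕ∞) := ih A' hA' a a' ch'
            have h2 : (G.pow ℓ).edist a' x ≤ 1 :=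
              (SimpleGraph.edist_eq_one_iff_adj.mpr hax.1).le
            refine Or.inr ⟨x, hPx, ?_⟩
            calc (G.pow ℓ).edist a x ≤ (G.pow ℓ).edist a a' + (G.pow ℓ).edist a' x :=
                  SimpleGraph.edist_triangle
              _ ≤ ((fstar r ℓ N α : ℕ) : ℕ∞) + 1 := add_le_add h1 h2
              _ = ((fstar r ℓ N α + 1 : ℕ) : ℕ∞) := by push_cast; ring
      rcases side h with hdone | ⟨x, hPx, hux⟩
      · exact hdone
      · have hsymm := rtg_symm (fun {a b} hr => Rel.symm hr) h
        rcases side hsymm with hdone | ⟨y, hPy, hvy⟩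
        · rwa [SimpleGraph.edist_comm]
        · have hxs := hP_edist hPx
          have hys := hP_edist hPy
          have hsy : (G.pow ℓ).edist s y ≤ ((r + ℓ - 1 : ℕ) : ℕ∞) := by
            rwa [SimpleGraph.edist_comm]
          have hyv : (G.pow ℓ).edist y v ≤ ((fstar r ℓ N α + 1 : ℕ) : ℕ∞) := by
            rwa [SimpleGraph.edist_comm]
          calc (G.pow ℓ).edist u v
              ≤ (G.pow ℓ).edist u x + (G.pow ℓ).edist x v := SimpleGraph.edist_triangle
            _ ≤ (G.pow ℓ).edist u x +
                ((G.pow ℓ).edist x s + ((G.pow ℓ).edist s y + (G.pow ℓ).edist y v)) := by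
                gcongr
                calc (G.pow ℓ).edist x v ≤ (G.pow ℓ).edist x s + (G.pow ℓ).edist s v :=
                      SimpleGraph.edist_triangle
                  _ ≤ (G.pow ℓ).edist x s + ((G.pow ℓ).edist s y + (G.pow ℓ).edist y v) := by
                      gcongr
                      exact SimpleGraph.edist_triangle
            _ ≤ ((fstar r ℓ N α + 1 : ℕ) : ℕ∞) + (((r + ℓ - 1 : ℕ) : ℕ∞) +
                (((r + ℓ - 1 : ℕ) : ℕ∞) + ((fstar r ℓ N α + 1 : ℕ) : ℕ∞))) := by
                gcongr
            _ = (((fstar r ℓ N α + 1) + ((r + ℓ - 1) + ((r + ℓ - 1) + (fstar r ℓ N α + 1))) : ℕ)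
                  : ℕ∞) := by push_cast; ring
            _ ≤ ((fstar r ℓ N (α+1) : ℕ) : ℕ∞) := by
                have : (fstar r ℓ N α + 1) + ((r + ℓ - 1) + ((r + ℓ - 1) + (fstar r ℓ N α + 1)))
                    ≤ fstar r ℓ N (α+1) := by
                  show _ ≤ 2*r + 2*ℓ + 2 * fstar r ℓ N α
                  omega
                exact_mod_cast this
end Stmt4Aux

/-- Deleting a `(k,r)`-centered set: combining any coloring of `Z` with a
coloring of `(G−Z)^ℓ` of weak diameter at most `N` gives a coloring of `G^ℓ`
of weak diameter at most `N* = fstar r ℓ N k ≥ N`. -/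

theorem stmt4 (k r ℓ N : ℕ) (hℓ : 0 < ℓ) (hN : 0 < N) :
    N ≤ fstar r ℓ N k ∧
    ∀ {V : Type} (G : SimpleGraph V) (S Z : Set V),
      S.encard ≤ (k : ℕ∞) → Z ⊆ ballSet G S r →
      ∀ (m : ℕ), 0 < m →
      ∀ (cZ : {v : V // v ∈ Z} → Fin m) (c : {v : V // v ∈ ({v | v ∉ Z} : Set V)} → Fin m),
        (∀ u v, MonoReach ((G.induce {v | v ∉ Z}).pow ℓ) c u v →
          ((G.induce {v | v ∉ Z}).pow ℓ).edist u v ≤ (N : ℕ∞)) →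
        ∀ u v, MonoReach (G.pow ℓ)
            (fun x => if h : x ∈ Z then cZ ⟨x, h⟩ else c ⟨x, h⟩) u v →
          (G.pow ℓ).edist u v ≤ ((fstar r ℓ N k : ℕ) : ℕ∞) := by
  refine ⟨Stmt4Aux.le_fstar r ℓ N k, ?_⟩
  intro V G S Z hS hZ m _ cZ c hc u v hreach
  set c' : V → Fin m := fun x => if h : x ∈ Z then cZ ⟨x, h⟩ else c ⟨x, h⟩ with hc'def
  have hc' : ∀ (x : V) (hx : x ∉ Z), c' x = c ⟨x, hx⟩ := fun x hx => dif_neg hx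
  have hchain : Relation.ReflTransGen (Stmt4Aux.Rel G Z r ℓ c' S) u v := by
    refine Relation.ReflTransGen.mono ?_ u v hreach
    rintro a b ⟨hadj, hcol⟩
    have hne : G.edist a b ≠ ⊤ := fun e => by
      have h2 : G.edist a b ≤ (ℓ : ℕ∞) := hadj.2
      rw [e] at h2
      exact (not_le.mpr (ENat.coe_lt_top ℓ)) h2
    obtain ⟨p, hp⟩ := SimpleGraph.exists_walk_of_edist_ne_top hne
    have hplen : p.length ≤ ℓ := by
      have := hp ▸ hadj.2
      exact_mod_cast this
    exact ⟨hadj, hcol, fun hz => hZ hz, fun hz => hZ hz,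
      p, hplen, fun x _ _ _ hz => hZ hz⟩
  exact Stmt4Aux.key hc' hℓ hc k S hS u v hchain
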